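/- Let A be a locally finitely presentable category in which every finitely generated object is finitely presentable. Then every finitely bounded functor from A to a locally finitely presentable category that preserves monomorphisms is finitary, and conversely every finitary monomorphism-preserving functor is finitely bounded. -/

import Mathlib

open CategoryTheory Limits Opposite Function

universe w v u

/-- An object is finitely presentable if its hom-functor preserves filtered colimits. -/
def IsFinitelyPresentable {C : Type u} [Category.{v} C] (A : C) : Prop :=
  ∀ (J : Type v) [SmallCategory J] [IsFiltered J] (Dg : J ⥤ C) (cc : Cocone Dg),
    Nonempty (IsColimit cc) → Nonempty (IsColimit ((coyoneda.obj (op A)).mapCocone cc))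

/-- A diagram of monomorphisms. -/
def MonoDiagram {C : Type u} [Category.{v} C] {J : Type*} [Category J] (Dg : J ⥤ C) : Prop :=
  ∀ ⦃i j : J⦄ (f : i ⟶ j), Mono (Dg.map f)

/-- An object is finitely generated if its hom-functor preserves filtered colimits of
monomorphisms. -/
def IsFinitelyGenerated {C : Type u} [Category.{v} C] (A : C) : Prop :=
  ∀ (J : Type v) [SmallCategory J] [IsFiltered J] (Dg : J ⥤ C), MonoDiagram Dg →
    ∀ (cc : Cocone Dg),
      Nonempty (IsColimit cc) → Nonempty (IsColimit ((coyoneda.obj (op A)).mapCocone cc))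

/-- A locally finitely presentable category: cocomplete, with a small family representing
all finitely presentable objects, such that every object is a filtered colimit of
finitely presentable objects. -/
def IsLFP (C : Type u) [Category.{v} C] : Prop :=
  HasColimits C ∧
  (∃ (ι : Type v) (G : ι → C), (∀ i, _root_.IsFinitelyPresentable (G i)) ∧
    ∀ X : C, _root_.IsFinitelyPresentable X → ∃ i, Nonempty (X ≅ G i)) ∧
  ∀ X : C, ∃ (J : Type v) (_ : SmallCategory J) (_ : IsFiltered J) (Dg : J ⥤ C)
    (cc : Cocone Dg), (∀ j, _root_.IsFinitelyPresentable (Dg.obj j)) ∧ Nonempty (IsColimit cc) ∧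
    Nonempty (cc.pt ≅ X)

/-- A functor is finitary if it preserves filtered colimits. -/
def IsFinitary {C : Type u} [Category.{v} C] {B : Type w} [Category.{v} B] (F : C ⥤ B) : Prop :=
  ∀ (J : Type v) [SmallCategory J] [IsFiltered J] (Dg : J ⥤ C) (cc : Cocone Dg),
    Nonempty (IsColimit cc) → Nonempty (IsColimit (F.mapCocone cc))

/-- A functor preserves filtered colimits of monomorphisms. -/
def PreservesFilteredColimitsOfMonos {C : Type u} [Category.{v} C] {B : Type w} [Category.{v} B]
    (F : C ⥤ B) : Prop :=
  ∀ (J : Type v) [SmallCategory J] [IsFiltered J] (Dg : J ⥤ C), MonoDiagram Dg →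
    ∀ (cc : Cocone Dg), Nonempty (IsColimit cc) → Nonempty (IsColimit (F.mapCocone cc))

/-- A functor is finitely bounded if every finitely generated subobject of `F.obj A`
factorizes through the `F`-image of a finitely generated subobject of `A`. -/
def FinitelyBounded {C : Type u} [Category.{v} C] {B : Type w} [Category.{v} B]
    (F : C ⥤ B) : Prop :=
  ∀ (A : C) (M₀ : B) (m₀ : M₀ ⟶ F.obj A), Mono m₀ → IsFinitelyGenerated M₀ →
    ∃ (M : C) (m : M ⟶ A), Mono m ∧ IsFinitelyGenerated M ∧
      ∃ g : M₀ ⟶ F.obj M, g ≫ F.map m = m₀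

/-- A morphism is finitary if it factorizes through a finitely presentable object. -/
def FinitaryMorphism {C : Type u} [Category.{v} C] {X Y : C} (u : X ⟶ Y) : Prop :=
  ∃ (Z : C) (v : X ⟶ Z) (w : Z ⟶ Y), _root_.IsFinitelyPresentable Z ∧ v ≫ w = u

/-- A strictly locally finitely presentable category: every object has, for each
finitely generated subobject, a finitary endomorphism fixing that subobject. -/
def StrictlyLFP (C : Type u) [Category.{v} C] : Prop :=
  IsLFP C ∧
  ∀ (A M : C) (m : M ⟶ A), Mono m → IsFinitelyGenerated M →
    ∃ u : A ⟶ A, FinitaryMorphism u ∧ m ≫ u = m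

section Aux

namespace StmtAux

open CategoryTheory Limits Opposite

variable {C : Type u} [Category.{v} C]

/-- The third clause of `IsLFP`: every object has a presentation as a filtered colimit of
finitely presentable objects. -/
abbrev HasFPPres (C : Type u) [Category.{v} C] : Prop :=
  ∀ X : C, ∃ (J : Type v) (_ : SmallCategory J) (_ : IsFiltered J) (Dg : J ⥤ C)
    (cc : Cocone Dg), (∀ j, _root_.IsFinitelyPresentable (Dg.obj j)) ∧ Nonempty (IsColimit cc) ∧
    Nonempty (cc.pt ≅ X)

theorem hasFPPres_of_isLFP (h : IsLFP C) : HasFPPres C := h.2.2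

/-- A map out of a finitely presentable object into a filtered colimit factors through a stage. -/
theorem fp_factor {P : C} (hP : _root_.IsFinitelyPresentable P) {J : Type v} [SmallCategory J]
    [IsFiltered J] {Dg : J ⥤ C} {cc : Cocone Dg} (hcc : IsColimit cc) (f : P ⟶ cc.pt) :
    ∃ (j : J) (g : P ⟶ Dg.obj j), g ≫ cc.ι.app j = f := by
  obtain ⟨t⟩ := hP J Dg cc ⟨hcc⟩
  obtain ⟨j, g, hg⟩ := Types.jointly_surjective (Dg ⋙ coyoneda.obj (op P)) t f
  exact ⟨j, g, hg⟩

/-- Two maps from a finitely presentable object into stages of a filtered colimit which agree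
in the colimit agree at some later stage. -/
theorem fp_merge {P : C} (hP : _root_.IsFinitelyPresentable P) {J : Type v} [SmallCategory J]
    [IsFiltered J] {Dg : J ⥤ C} {cc : Cocone Dg} (hcc : IsColimit cc)
    {j j' : J} (g : P ⟶ Dg.obj j) (g' : P ⟶ Dg.obj j')
    (h : g ≫ cc.ι.app j = g' ≫ cc.ι.app j') :
    ∃ (k : J) (α : j ⟶ k) (β : j' ⟶ k), g ≫ Dg.map α = g' ≫ Dg.map β := by
  obtain ⟨t⟩ := hP J Dg cc ⟨hcc⟩
  exact (Types.FilteredColimit.isColimit_eq_iff (Dg ⋙ coyoneda.obj (op P)) t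
    (xi := g) (xj := g')).mp h

/-- Finitely presentable objects are jointly epic. -/
theorem hom_ext_of_fp (hpres : HasFPPres C) {X Y : C} {u v : X ⟶ Y}
    (h : ∀ (P : C), _root_.IsFinitelyPresentable P → ∀ p : P ⟶ X, p ≫ u = p ≫ v) : u = v := by
  obtain ⟨J, _, _, Dg, cc, hfp, ⟨hcc⟩, ⟨e⟩⟩ := hpres X
  have h2 : e.hom ≫ u = e.hom ≫ v := by
    apply hcc.hom_ext
    intro j
    simpa using h _ (hfp j) (cc.ι.app j ≫ e.hom)
  exact (cancel_epi e.hom).mp h2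

/-- To check that a map is a monomorphism, it suffices to cancel maps from finitely
presentable objects. -/
theorem mono_of_fp_cancel (hpres : HasFPPres C) {X Y : C} (m : X ⟶ Y)
    (h : ∀ (P : C), _root_.IsFinitelyPresentable P → ∀ a b : P ⟶ X, a ≫ m = b ≫ m → a = b) :
    Mono m := by
  constructor
  intro Z u v huv
  apply hom_ext_of_fp hpres
  intro P hP p
  exact h P hP (p ≫ u) (p ≫ v) (by simp only [Category.assoc, huv])

/-- Colimit injections of a filtered colimit of monomorphisms are monomorphisms. -/
theorem mono_leg_of_monoDiagram (hpres : HasFPPres C) {K : Type v} [SmallCategory K]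
    [IsFiltered K] {E : K ⥤ C} (hE : MonoDiagram E) {dd : Cocone E} (hdd : IsColimit dd)
    (k : K) : Mono (dd.ι.app k) := by
  apply mono_of_fp_cancel hpres
  intro P hP a b hab
  obtain ⟨k₂, α, β, h2⟩ := fp_merge hP hdd a b hab
  have h3 : a ≫ E.map (α ≫ IsFiltered.coeqHom α β) = b ≫ E.map (α ≫ IsFiltered.coeqHom α β) :=
    calc a ≫ E.map (α ≫ IsFiltered.coeqHom α β)
        = b ≫ E.map (β ≫ IsFiltered.coeqHom α β) := by
          rw [E.map_comp, E.map_comp, ← Category.assoc, h2, Category.assoc]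
      _ = b ≫ E.map (α ≫ IsFiltered.coeqHom α β) := by rw [← IsFiltered.coeq_condition]
  haveI := hE (α ≫ IsFiltered.coeqHom α β)
  exact (cancel_mono (E.map (α ≫ IsFiltered.coeqHom α β))).mp h3

/-! ### The tower construction: images via iterated wide coequalizers -/

/-- An approximation of an object `A`: an object with a map to `A`. -/
structure Appr {C : Type u} [Category.{v} C] (A : C) : Type max u v where
  D : C
  f : D ⟶ A

/-- A `Type v` copy of the natural numbers, with its poset category structure.
(We use a definitionally opaque copy to pin down the category instance.) -/
abbrev NatU : Type v := ULift ℕ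

instance : SemilatticeSup (NatU.{v}) := inferInstanceAs (SemilatticeSup (ULift ℕ))

instance : Nonempty (NatU.{v}) := ⟨⟨0⟩⟩

/-- The inclusion `ℕ → NatU`. -/
def NatU.mk (n : ℕ) : NatU.{v} := ULift.up n

lemma NatU.mk_le_mk {n m : ℕ} (h : n ≤ m) : NatU.mk.{v} n ≤ NatU.mk m := h

/-- The functor from the lifted to the honest natural numbers. -/
def downFunctor : NatU.{v} ⥤ ℕ where
  obj x := x.down
  map {X Y} h := homOfLE (by have := leOfHom h; exact this)

section Tower

variable [HasColimits C] {ι' : Type v} {A : C}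

/-- Index type for the pairs of maps from the generators to `x.D` that are equalized by `x.f`. -/
abbrev PairIdx (G : ι' → C) (x : Appr A) : Type v :=
  Σ i : ι', {p : (G i ⟶ x.D) × (G i ⟶ x.D) // p.1 ≫ x.f = p.2 ≫ x.f}

noncomputable abbrev stepR (G : ι' → C) (x : Appr A) : C :=
  ∐ fun s : PairIdx G x => G s.1

noncomputable def stepρ₁ (G : ι' → C) (x : Appr A) : stepR G x ⟶ x.D :=
  Sigma.desc fun s => s.2.1.1

noncomputable def stepρ₂ (G : ι' → C) (x : Appr A) : stepR G x ⟶ x.D :=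
  Sigma.desc fun s => s.2.1.2

/-- One step of the tower: coequalize all pairs of maps from generators equalized by `x.f`. -/
noncomputable def step (G : ι' → C) (x : Appr A) : Appr A where
  D := coequalizer (stepρ₁ G x) (stepρ₂ G x)
  f := coequalizer.desc x.f (by
    apply Sigma.hom_ext
    intro s
    simp only [stepρ₁, stepρ₂, colimit.ι_desc_assoc, Cofan.mk_pt, Cofan.mk_ι_app]
    exact s.2.2)

noncomputable def stepπ (G : ι' → C) (x : Appr A) : x.D ⟶ (step G x).D :=
  coequalizer.π _ _

lemma stepπ_epi (G : ι' → C) (x : Appr A) : Epi (stepπ G x) := by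
  dsimp only [stepπ]; exact coequalizer.π_epi

lemma stepπ_fac (G : ι' → C) (x : Appr A) : stepπ G x ≫ (step G x).f = x.f :=
  coequalizer.π_desc _ _

lemma step_coeq (G : ι' → C) (x : Appr A) {i : ι'} {a b : G i ⟶ x.D}
    (h : a ≫ x.f = b ≫ x.f) :
    a ≫ stepπ G x = b ≫ stepπ G x := by
  have h1 : Sigma.ι (fun s : PairIdx G x => G s.1) ⟨i, (a, b), h⟩ ≫ stepρ₁ G x = a :=
    Sigma.ι_desc _ _
  have h2 : Sigma.ι (fun s : PairIdx G x => G s.1) ⟨i, (a, b), h⟩ ≫ stepρ₂ G x = b :=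
    Sigma.ι_desc _ _
  have hcond : stepρ₁ G x ≫ stepπ G x = stepρ₂ G x ≫ stepπ G x :=
    coequalizer.condition _ _
  have e1 : a ≫ stepπ G x
      = Sigma.ι (fun s : PairIdx G x => G s.1) ⟨i, (a, b), h⟩ ≫ (stepρ₁ G x ≫ stepπ G x) := by
    rw [← Category.assoc, h1]
  have e2 : b ≫ stepπ G x
      = Sigma.ι (fun s : PairIdx G x => G s.1) ⟨i, (a, b), h⟩ ≫ (stepρ₂ G x ≫ stepπ G x) := by
    rw [← Category.assoc, h2]
  rw [e1, e2, hcond]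

lemma step_desc (G : ι' → C) (x : Appr A) {W : C} (h : x.D ⟶ W)
    (hw : ∀ (i : ι') (a b : G i ⟶ x.D), a ≫ x.f = b ≫ x.f → a ≫ h = b ≫ h) :
    ∃ h' : (step G x).D ⟶ W, stepπ G x ≫ h' = h := by
  refine ⟨coequalizer.desc h ?_, coequalizer.π_desc _ _⟩
  apply Sigma.hom_ext
  intro s
  simp only [stepρ₁, stepρ₂, colimit.ι_desc_assoc, Cofan.mk_pt, Cofan.mk_ι_app]
  exact hw s.1 s.2.1.1 s.2.1.2 s.2.2

/-- The tower of iterated coequalizations starting at `x₀`. -/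
noncomputable abbrev tower (G : ι' → C) (x₀ : Appr A) (n : ℕ) : Appr A :=
  Nat.rec x₀ (fun _ y => step G y) n

/-- The tower as a functor on `ℕ`. -/
noncomputable def chain (G : ι' → C) (x₀ : Appr A) : ℕ ⥤ C :=
  Functor.ofSequence (fun n => stepπ G (tower G x₀ n))

/-- The tower as a functor on `NatU`. -/
noncomputable def chainU (G : ι' → C) (x₀ : Appr A) : NatU.{v} ⥤ C :=
  downFunctor ⋙ chain G x₀

/-- Build a cocone on the `ULift`ed chain from a step-compatible family of maps. -/
noncomputable def coconeU (G : ι' → C) (x₀ : Appr A) {W : C}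
    (g : ∀ n, (tower G x₀ n).D ⟶ W)
    (hg : ∀ n, stepπ G (tower G x₀ n) ≫ g (n + 1) = g n) : Cocone (chainU G x₀) :=
  Cocone.whisker downFunctor
    { pt := W
      ι := NatTrans.ofSequence (F := chain G x₀) (G := (Functor.const ℕ).obj W) g (by
        intro n
        simp only [Functor.const_obj_obj, Functor.const_obj_map, Category.comp_id]
        have h : (chain G x₀).map (homOfLE (n.le_add_right 1)) = stepπ G (tower G x₀ n) :=
          Functor.ofSequence_map_homOfLE_succ _ n
        erw [h, hg n, Category.comp_id]) }

/-- The image object: the colimit of the tower. -/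
noncomputable abbrev imgObj (G : ι' → C) (x₀ : Appr A) : C := colimit (chainU G x₀)

/-- The colimit injections of the tower. -/
noncomputable def imgι (G : ι' → C) (x₀ : Appr A) (n : ℕ) :
    (tower G x₀ n).D ⟶ imgObj G x₀ :=
  colimit.ι (chainU G x₀) (NatU.mk n)

/-- The quotient map `x₀.D ⟶ imgObj`. -/
noncomputable def imgQ (G : ι' → C) (x₀ : Appr A) : x₀.D ⟶ imgObj G x₀ := imgι G x₀ 0

/-- The monomorphism `imgObj ⟶ A`. -/
noncomputable def imgM (G : ι' → C) (x₀ : Appr A) : imgObj G x₀ ⟶ A :=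
  colimit.desc _ (coconeU G x₀ (fun n => (tower G x₀ n).f) (fun n => stepπ_fac G _))

lemma imgι_succ (G : ι' → C) (x₀ : Appr A) (n : ℕ) :
    imgι G x₀ n = stepπ G (tower G x₀ n) ≫ imgι G x₀ (n + 1) := by
  have h := colimit.w (chainU G x₀) (homOfLE (NatU.mk_le_mk (n.le_add_right 1)))
  have h2 : (chainU G x₀).map (homOfLE (NatU.mk_le_mk (n.le_add_right 1)))
      = stepπ G (tower G x₀ n) :=
    Functor.ofSequence_map_homOfLE_succ (fun n => stepπ G (tower G x₀ n)) n
  dsimp only [imgι]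
  erw [← h, h2]; rfl

lemma imgι_fac (G : ι' → C) (x₀ : Appr A) (n : ℕ) :
    imgι G x₀ n ≫ imgM G x₀ = (tower G x₀ n).f := by
  dsimp only [imgι, imgM]
  exact colimit.ι_desc _ _

lemma imgQ_fac (G : ι' → C) (x₀ : Appr A) : imgQ G x₀ ≫ imgM G x₀ = x₀.f :=
  imgι_fac G x₀ 0

lemma imgQ_epi (G : ι' → C) (x₀ : Appr A) : Epi (imgQ G x₀) := by
  constructor
  intro Z u v huv
  have key : ∀ n, colimit.ι (chainU G x₀) (NatU.mk n) ≫ u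
      = colimit.ι (chainU G x₀) (NatU.mk n) ≫ v := by
    intro n
    induction n with
    | zero => exact huv
    | succ n ih =>
      rw [show (colimit.ι (chainU G x₀) (NatU.mk n) : _ ⟶ _) = imgι G x₀ n from rfl,
        imgι_succ G x₀ n] at ih
      dsimp only [imgι] at ih
      haveI := stepπ_epi G (tower G x₀ n)
      erw [Category.assoc, Category.assoc] at ih
      exact (cancel_epi (stepπ G (tower G x₀ n))).mp ih
  apply colimit.hom_ext
  intro n
  exact key n.down

end Tower

section TowerProps

variable [HasColimits C] {ι' : Type v} {A : C}

/-- The connecting maps of the tower. -/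
noncomputable def towerMap (G : ι' → C) (x₀ : Appr A) {n m : ℕ} (h : n ≤ m) :
    (tower G x₀ n).D ⟶ (tower G x₀ m).D :=
  (chainU G x₀).map (homOfLE (NatU.mk_le_mk h))

lemma towerMap_ι (G : ι' → C) (x₀ : Appr A) {n m : ℕ} (h : n ≤ m) :
    towerMap G x₀ h ≫ imgι G x₀ m = imgι G x₀ n :=
  colimit.w (chainU G x₀) (homOfLE (NatU.mk_le_mk h))

lemma tower_succ_f (G : ι' → C) (x₀ : Appr A) (n : ℕ) :
    stepπ G (tower G x₀ n) ≫ (tower G x₀ (n + 1)).f = (tower G x₀ n).f :=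
  stepπ_fac G _

lemma imgM_mono (G : ι' → C) (hpres : HasFPPres C)
    (hrep : ∀ X : C, _root_.IsFinitelyPresentable X → ∃ i, Nonempty (X ≅ G i))
    (x₀ : Appr A) : Mono (imgM G x₀) := by
  apply mono_of_fp_cancel hpres
  intro P hP a b hab
  obtain ⟨j₁, a₁, ha⟩ := fp_factor hP (colimit.isColimit (chainU G x₀)) a
  obtain ⟨j₂, b₁, hb⟩ := fp_factor hP (colimit.isColimit (chainU G x₀)) b
  set n := max j₁.down j₂.down with hn
  obtain ⟨a₂, ha₂⟩ : ∃ a₂ : P ⟶ (tower G x₀ n).D, a₂ ≫ imgι G x₀ n = a :=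
    ⟨a₁ ≫ towerMap G x₀ (le_max_left j₁.down j₂.down), by
      erw [Category.assoc, towerMap_ι]; exact ha⟩
  obtain ⟨b₂, hb₂⟩ : ∃ b₂ : P ⟶ (tower G x₀ n).D, b₂ ≫ imgι G x₀ n = b :=
    ⟨b₁ ≫ towerMap G x₀ (le_max_right j₁.down j₂.down), by
      erw [Category.assoc, towerMap_ι]; exact hb⟩
  have hpair : a₂ ≫ (tower G x₀ n).f = b₂ ≫ (tower G x₀ n).f := by
    rw [← imgι_fac G x₀ n, ← Category.assoc, ← Category.assoc, ha₂, hb₂, hab]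
  obtain ⟨i, ⟨e⟩⟩ := hrep P hP
  have h3 : (e.inv ≫ a₂) ≫ (tower G x₀ n).f = (e.inv ≫ b₂) ≫ (tower G x₀ n).f := by
    rw [Category.assoc, Category.assoc, hpair]
  have h4 := step_coeq G (tower G x₀ n) h3
  have h5 : a₂ ≫ stepπ G (tower G x₀ n) = b₂ ≫ stepπ G (tower G x₀ n) := by
    have := congrArg (fun t => e.hom ≫ t) h4
    simpa using this
  erw [← ha₂, ← hb₂, imgι_succ G x₀ n, ← Category.assoc, ← Category.assoc, h5]

lemma img_desc (G : ι' → C) (x₀ : Appr A) {Y Z : C} (ν : Y ⟶ Z) (hν : Mono ν)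
    (f : imgObj G x₀ ⟶ Z) (g₀ : x₀.D ⟶ Y) (hg₀ : g₀ ≫ ν = imgQ G x₀ ≫ f) :
    ∃ h : imgObj G x₀ ⟶ Y, h ≫ ν = f := by
  haveI := hν
  have key : ∀ n, ∃ g : (tower G x₀ n).D ⟶ Y, g ≫ ν = imgι G x₀ n ≫ f := by
    intro n
    induction n with
    | zero => exact ⟨g₀, hg₀⟩
    | succ n ih =>
      obtain ⟨g, hg⟩ := ih
      obtain ⟨g', hg'⟩ := step_desc G (tower G x₀ n) g (fun i a b hab => by
        have h1 : a ≫ stepπ G (tower G x₀ n) = b ≫ stepπ G (tower G x₀ n) :=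
          step_coeq G _ hab
        apply (cancel_mono ν).mp
        erw [Category.assoc, Category.assoc, hg, imgι_succ G x₀ n,
          ← Category.assoc, ← Category.assoc, h1]
        simp only [Category.assoc])
      refine ⟨g', ?_⟩
      have h2 : stepπ G (tower G x₀ n) ≫ g' ≫ ν
          = stepπ G (tower G x₀ n) ≫ imgι G x₀ (n + 1) ≫ f := by
        erw [← Category.assoc, hg', hg, imgι_succ G x₀ n, Category.assoc]
      haveI := stepπ_epi G (tower G x₀ n)
      exact (cancel_epi (stepπ G (tower G x₀ n))).mp h2
  choose g hg using key
  have hcomp : ∀ n, stepπ G (tower G x₀ n) ≫ g (n + 1) = g n := fun n => by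
    apply (cancel_mono ν).mp
    erw [Category.assoc, hg, hg, imgι_succ G x₀ n, Category.assoc]
  refine ⟨colimit.desc _ (coconeU G x₀ g hcomp), ?_⟩
  apply colimit.hom_ext
  intro j
  erw [colimit.ι_desc_assoc]
  exact hg j.down

lemma img_fg (G : ι' → C) (hpres : HasFPPres C) (x₀ : Appr A)
    (hx : _root_.IsFinitelyPresentable x₀.D) :
    IsFinitelyGenerated (imgObj G x₀) := by
  intro K _ _ E hE dd ⟨hdd⟩
  haveI : ∀ k, Mono (dd.ι.app k) := fun k => mono_leg_of_monoDiagram hpres hE hdd k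
  constructor
  apply Types.FilteredColimit.isColimitOf
  · intro f
    obtain ⟨k₀, g₀, hg₀⟩ := fp_factor hx hdd (imgQ G x₀ ≫ f)
    obtain ⟨h, hh⟩ := img_desc G x₀ (dd.ι.app k₀) inferInstance f g₀ hg₀
    exact ⟨k₀, h, hh.symm⟩
  · intro k k' f f' hff
    have hff' : f ≫ dd.ι.app k = f' ≫ dd.ι.app k' := hff
    refine ⟨IsFiltered.max k k', IsFiltered.leftToMax k k', IsFiltered.rightToMax k k', ?_⟩
    show f ≫ E.map _ = f' ≫ E.map _
    apply (cancel_mono (dd.ι.app (IsFiltered.max k k'))).mp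
    rw [Category.assoc, Category.assoc, dd.w, dd.w, hff']

lemma img_lift (G : ι' → C) {A' : C} (x₀ : Appr A) (x₀' : Appr A')
    (himgM' : Mono (imgM G x₀'))
    (α : x₀.D ⟶ x₀'.D) (β : A ⟶ A') (hcomm : α ≫ x₀'.f = x₀.f ≫ β) :
    ∃ ψ : imgObj G x₀ ⟶ imgObj G x₀', imgQ G x₀ ≫ ψ = α ≫ imgQ G x₀' ∧
      ψ ≫ imgM G x₀' = imgM G x₀ ≫ β := by
  haveI := himgM'
  have key : ∀ n, ∃ g : (tower G x₀ n).D ⟶ imgObj G x₀',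
      g ≫ imgM G x₀' = (tower G x₀ n).f ≫ β := by
    intro n
    induction n with
    | zero =>
      refine ⟨α ≫ imgQ G x₀', ?_⟩
      erw [Category.assoc, imgQ_fac, hcomm]
      rfl
    | succ n ih =>
      obtain ⟨g, hg⟩ := ih
      obtain ⟨g', hg'⟩ := step_desc G (tower G x₀ n) g (fun i a b hab => by
        apply (cancel_mono (imgM G x₀')).mp
        rw [Category.assoc, Category.assoc, hg, ← Category.assoc, ← Category.assoc, hab])
      refine ⟨g', ?_⟩
      have h2 : stepπ G (tower G x₀ n) ≫ g' ≫ imgM G x₀'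
          = stepπ G (tower G x₀ n) ≫ (tower G x₀ (n + 1)).f ≫ β := by
        erw [← Category.assoc, hg', hg, ← Category.assoc, tower_succ_f]
      haveI := stepπ_epi G (tower G x₀ n)
      exact (cancel_epi (stepπ G (tower G x₀ n))).mp h2
  choose g hg using key
  have hcomp : ∀ n, stepπ G (tower G x₀ n) ≫ g (n + 1) = g n := fun n => by
    apply (cancel_mono (imgM G x₀')).mp
    erw [Category.assoc, hg, hg, ← Category.assoc, tower_succ_f]
  have hg0 : g 0 = α ≫ imgQ G x₀' := by
    apply (cancel_mono (imgM G x₀')).mp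
    erw [hg 0, Category.assoc, imgQ_fac, hcomm]
    rfl
  refine ⟨colimit.desc _ (coconeU G x₀ g hcomp), ?_, ?_⟩
  · have := colimit.ι_desc (coconeU G x₀ g hcomp) (NatU.mk 0)
    rw [show (colimit.ι (chainU G x₀) (NatU.mk 0) : _ ⟶ _) = imgQ G x₀ from rfl] at this
    erw [this]
    exact hg0
  · apply colimit.hom_ext
    intro j
    erw [colimit.ι_desc_assoc]
    have h3 : (imgι G x₀ j.down) ≫ imgM G x₀ ≫ β = (tower G x₀ j.down).f ≫ β := by
      rw [← Category.assoc, imgι_fac]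
    exact (hg j.down).trans h3.symm

end TowerProps

/-! ### The union of finitely generated subobjects -/

/-- A cocone given by an explicit family of legs. -/
@[simps]
def myCocone {K : Type v} [SmallCategory K] (N : K ⥤ C) (X : C) (nn : ∀ κ, N.obj κ ⟶ X)
    (w : ∀ ⦃κ κ'⦄ (f : κ ⟶ κ'), N.map f ≫ nn κ' = nn κ) : Cocone N where
  pt := X
  ι :=
    { app := nn
      naturality := fun κ κ' f => by
        simp only [Functor.const_obj_obj, Functor.const_obj_map, Category.comp_id]
        exact w f }

section Union

variable [HasColimits C] {ι' : Type v}

variable (G : ι' → C) (hpres : HasFPPres C)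
  (hrep : ∀ X : C, _root_.IsFinitelyPresentable X → ∃ i, Nonempty (X ≅ G i))
  {K : Type v} [SmallCategory K] (E : K ⥤ C) (dd : Cocone E) {X : C} (iso : dd.pt ≅ X)

/-- The `κ`-th approximation of `X`. -/
noncomputable def unionAppr (κ : K) : Appr X :=
  ⟨E.obj κ, dd.ι.app κ ≫ iso.hom⟩

include hpres hrep in
lemma unionMap_exists {κ κ' : K} (f : κ ⟶ κ') :
    ∃ ψ : imgObj G (unionAppr E dd iso κ) ⟶ imgObj G (unionAppr E dd iso κ'),
      imgQ G (unionAppr E dd iso κ) ≫ ψ = E.map f ≫ imgQ G (unionAppr E dd iso κ') ∧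
      ψ ≫ imgM G (unionAppr E dd iso κ') = imgM G (unionAppr E dd iso κ) ≫ 𝟙 X :=
  img_lift G (unionAppr E dd iso κ) (unionAppr E dd iso κ') (imgM_mono G hpres hrep _) (E.map f) (𝟙 X) (by
    show E.map f ≫ dd.ι.app κ' ≫ iso.hom = (dd.ι.app κ ≫ iso.hom) ≫ 𝟙 X
    rw [← Category.assoc, dd.w, Category.comp_id])

/-- The connecting map between approximations. -/
noncomputable def unionMap {κ κ' : K} (f : κ ⟶ κ') :
    imgObj G (unionAppr E dd iso κ) ⟶ imgObj G (unionAppr E dd iso κ') :=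
  (unionMap_exists G hpres hrep E dd iso f).choose

lemma unionMap_Q {κ κ' : K} (f : κ ⟶ κ') :
    imgQ G (unionAppr E dd iso κ) ≫ unionMap G hpres hrep E dd iso f
      = E.map f ≫ imgQ G (unionAppr E dd iso κ') :=
  (unionMap_exists G hpres hrep E dd iso f).choose_spec.1

lemma unionMap_M {κ κ' : K} (f : κ ⟶ κ') :
    unionMap G hpres hrep E dd iso f ≫ imgM G (unionAppr E dd iso κ')
      = imgM G (unionAppr E dd iso κ) :=
  ((unionMap_exists G hpres hrep E dd iso f).choose_spec.2).trans (Category.comp_id _)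

/-- The union diagram of the finitely generated images. -/
noncomputable def unionFunctor : K ⥤ C where
  obj κ := imgObj G (unionAppr E dd iso κ)
  map f := unionMap G hpres hrep E dd iso f
  map_id κ := by
    haveI := imgM_mono G hpres hrep (unionAppr E dd iso κ)
    apply (cancel_mono (imgM G (unionAppr E dd iso κ))).mp
    show unionMap G hpres hrep E dd iso (𝟙 κ) ≫ _ = 𝟙 _ ≫ _
    rw [unionMap_M, Category.id_comp]
  map_comp {κ₁ κ₂ κ₃} f g := by
    haveI := imgM_mono G hpres hrep (unionAppr E dd iso κ₃)
    apply (cancel_mono (imgM G (unionAppr E dd iso κ₃))).mp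
    show unionMap G hpres hrep E dd iso (f ≫ g) ≫ _
        = (unionMap G hpres hrep E dd iso f ≫ unionMap G hpres hrep E dd iso g) ≫ _
    rw [unionMap_M, Category.assoc, unionMap_M, unionMap_M]

end Union

/-- Every morphism with finitely presentable domain factors through a finitely generated
subobject. -/
theorem exists_image (hC : IsLFP C) {D₀ A : C} (u₀ : D₀ ⟶ A) :
    ∃ (M : C) (e : D₀ ⟶ M) (m : M ⟶ A), Mono m ∧ e ≫ m = u₀ ∧
      (_root_.IsFinitelyPresentable D₀ → IsFinitelyGenerated M) := by
  obtain ⟨hcol, ⟨ι', G, hG, hrep⟩, hpres⟩ := hC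
  haveI := hcol
  refine ⟨imgObj G ⟨D₀, u₀⟩, imgQ G ⟨D₀, u₀⟩, imgM G ⟨D₀, u₀⟩,
    imgM_mono G hpres hrep _, imgQ_fac G ⟨D₀, u₀⟩, fun h => img_fg G hpres ⟨D₀, u₀⟩ h⟩

/-- Every object of an lfp category is the colimit of a filtered diagram of finitely
generated subobjects along monomorphisms, with monic colimit injections. -/
theorem exists_union (hC : IsLFP C) (X : C) :
    ∃ (K : Type v) (_ : SmallCategory K) (_ : IsFiltered K) (N : K ⥤ C)
      (nn : ∀ κ, N.obj κ ⟶ X) (w : ∀ ⦃κ κ'⦄ (f : κ ⟶ κ'), N.map f ≫ nn κ' = nn κ),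
      MonoDiagram N ∧ (∀ κ, IsFinitelyGenerated (N.obj κ)) ∧ (∀ κ, Mono (nn κ)) ∧
      Nonempty (IsColimit (myCocone N X nn w)) := by
  obtain ⟨hcol, ⟨ι', G, hG, hrep⟩, hpres⟩ := hC
  haveI := hcol
  obtain ⟨K, instK, instF, E, dd, hfp, ⟨hdd⟩, ⟨iso⟩⟩ := hpres X
  have hM : ∀ κ, Mono (imgM G (unionAppr E dd iso κ)) := fun κ =>
    imgM_mono G hpres hrep _
  refine ⟨K, instK, instF, unionFunctor G hpres hrep E dd iso,
    fun κ => imgM G (unionAppr E dd iso κ),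
    fun κ κ' f => unionMap_M G hpres hrep E dd iso f, ?_, ?_, ?_, ?_⟩
  · intro κ κ' f
    show Mono (unionMap G hpres hrep E dd iso f)
    haveI : Mono (unionMap G hpres hrep E dd iso f ≫ imgM G (unionAppr E dd iso κ')) := by
      erw [unionMap_M]
      exact hM κ
    exact mono_of_mono (unionMap G hpres hrep E dd iso f) (imgM G (unionAppr E dd iso κ'))
  · exact fun κ => img_fg G hpres (unionAppr E dd iso κ) (hfp κ)
  · exact hM
  · refine ⟨⟨fun s => iso.inv ≫ hdd.desc ⟨s.pt,
      { app := fun κ => imgQ G (unionAppr E dd iso κ) ≫ s.ι.app κ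
        naturality := fun κ κ' f => ?_ }⟩, fun s κ => ?_, fun s m hm => ?_⟩⟩
    · simp only [Functor.const_obj_obj, Functor.const_obj_map, Category.comp_id]
      have h1 : E.map f ≫ imgQ G (unionAppr E dd iso κ')
          = imgQ G (unionAppr E dd iso κ) ≫ unionMap G hpres hrep E dd iso f :=
        (unionMap_Q G hpres hrep E dd iso f).symm
      erw [← Category.assoc, h1, Category.assoc]
      congr 1
      exact s.w f
    · -- fac
      haveI := imgQ_epi G (unionAppr E dd iso κ)
      apply (cancel_epi (imgQ G (unionAppr E dd iso κ))).mp
      have h2 : imgQ G (unionAppr E dd iso κ) ≫ imgM G (unionAppr E dd iso κ)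
          = dd.ι.app κ ≫ iso.hom := imgQ_fac G (unionAppr E dd iso κ)
      show imgQ G (unionAppr E dd iso κ) ≫ imgM G (unionAppr E dd iso κ) ≫ _ = _
      erw [← Category.assoc, h2, Category.assoc, Iso.hom_inv_id_assoc]
      exact hdd.fac _ κ
    · -- uniq
      erw [Iso.eq_inv_comp]
      apply hdd.hom_ext
      intro κ
      rw [hdd.fac]
      have h2 : dd.ι.app κ ≫ iso.hom
          = imgQ G (unionAppr E dd iso κ) ≫ imgM G (unionAppr E dd iso κ) :=
        (imgQ_fac G (unionAppr E dd iso κ)).symm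
      have hm' : imgM G (unionAppr E dd iso κ) ≫ m = s.ι.app κ := hm κ
      show dd.ι.app κ ≫ iso.hom ≫ m = imgQ G (unionAppr E dd iso κ) ≫ s.ι.app κ
      erw [← hm', ← Category.assoc, ← Category.assoc, h2, Category.assoc]

/-! ### The comparison criterion and preservation of unions -/

/-- A cocone over a filtered diagram is colimiting provided the comparison map from the
colimit is bijective on maps from finitely presentable objects. -/
theorem isColimit_of_fp_comparison {B : Type w} [Category.{v} B] [HasColimits B]
    (hpres : HasFPPres B) {K : Type v} [SmallCategory K] [IsFiltered K]
    {D' : K ⥤ B} (c : Cocone D')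
    (hS : ∀ (P : B), _root_.IsFinitelyPresentable P → ∀ g : P ⟶ c.pt,
      ∃ x : P ⟶ colimit D', x ≫ colimit.desc D' c = g)
    (hI : ∀ (P : B), _root_.IsFinitelyPresentable P → ∀ x y : P ⟶ colimit D',
      x ≫ colimit.desc D' c = y ≫ colimit.desc D' c → x = y) :
    Nonempty (IsColimit c) := by
  have hmono : Mono (colimit.desc D' c) := mono_of_fp_cancel hpres _ hI
  haveI := hmono
  obtain ⟨K₂, _, _, E₂, dd₂, hfp₂, ⟨hdd₂⟩, ⟨iso₂⟩⟩ := hpres c.pt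
  choose l hl using fun κ => hS _ (hfp₂ κ) (dd₂.ι.app κ ≫ iso₂.hom)
  have hnat : ∀ {κ κ'} (f : κ ⟶ κ'), E₂.map f ≫ l κ' = l κ := by
    intro κ κ' f
    apply (cancel_mono (colimit.desc D' c)).mp
    rw [Category.assoc, hl, hl, ← Category.assoc, dd₂.w]
  let c₂ : Cocone E₂ := ⟨colimit D',
    { app := l
      naturality := fun κ κ' f => by
        simp only [Functor.const_obj_obj, Functor.const_obj_map, Category.comp_id]
        exact hnat f }⟩
  have ht : ∀ κ, dd₂.ι.app κ ≫ hdd₂.desc c₂ = l κ := fun κ =>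
    hdd₂.fac c₂ κ
  have h0 : hdd₂.desc c₂ ≫ colimit.desc D' c = iso₂.hom := by
    apply hdd₂.hom_ext
    intro κ
    rw [← Category.assoc, ht, hl]
  have h1 : (iso₂.inv ≫ hdd₂.desc c₂) ≫ colimit.desc D' c = 𝟙 c.pt := by
    rw [Category.assoc, h0, Iso.inv_hom_id]
  have h2 : colimit.desc D' c ≫ iso₂.inv ≫ hdd₂.desc c₂ = 𝟙 (colimit D') := by
    apply (cancel_mono (colimit.desc D' c)).mp
    rw [Category.assoc, Category.assoc]
    rw [show iso₂.inv ≫ hdd₂.desc c₂ ≫ colimit.desc D' c = 𝟙 c.pt by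
      rw [← Category.assoc]; exact h1]
    rw [Category.comp_id, Category.id_comp]
  haveI : IsIso (colimit.desc D' c) := ⟨iso₂.inv ≫ hdd₂.desc c₂, h2, h1⟩
  haveI : IsIso ((colimit.isColimit D').desc c) := by
    rw [colimit.isColimit_desc]
    infer_instance
  exact ⟨IsColimit.ofPointIso (colimit.isColimit D')⟩

/-- A finitely bounded functor preserving monomorphisms preserves filtered colimits of
monomorphisms (with monic colimit injections). -/
theorem bounded_preserves_union {B : Type w} [Category.{v} B]
    (hB : IsLFP B) (F : C ⥤ B) [F.PreservesMonomorphisms] (hbd : FinitelyBounded F)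
    {K : Type v} [SmallCategory K] [IsFiltered K] {N : K ⥤ C} (hN : MonoDiagram N)
    (cn : Cocone N) (hcn : IsColimit cn) (hleg : ∀ κ, Mono (cn.ι.app κ)) :
    Nonempty (IsColimit (F.mapCocone cn)) := by
  haveI := hB.1
  have hpresB : HasFPPres B := hasFPPres_of_isLFP hB
  apply isColimit_of_fp_comparison hpresB (F.mapCocone cn)
  · intro P hP g
    obtain ⟨M₀, e₀, m₀, hm₀, hfac₀, hfg₀⟩ := exists_image hB (g : P ⟶ F.obj cn.pt)
    obtain ⟨M, m, hm, hMfg, g₁, hg₁⟩ := hbd cn.pt M₀ m₀ hm₀ (hfg₀ hP)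
    obtain ⟨t⟩ := hMfg K N hN cn ⟨hcn⟩
    obtain ⟨κ, w1, hw1⟩ := Types.jointly_surjective (N ⋙ coyoneda.obj (op M)) t m
    refine ⟨e₀ ≫ g₁ ≫ F.map w1 ≫ colimit.ι (N ⋙ F) κ, ?_⟩
    have hι : colimit.ι (N ⋙ F) κ ≫ colimit.desc (N ⋙ F) (F.mapCocone cn)
        = F.map (cn.ι.app κ) := colimit.ι_desc _ _
    have hw1' : w1 ≫ cn.ι.app κ = m := hw1
    rw [Category.assoc, Category.assoc, Category.assoc, hι, ← F.map_comp, hw1', hg₁, hfac₀]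
  · intro P hP x y hxy
    obtain ⟨κx, x₁, hx⟩ := fp_factor hP (colimit.isColimit (N ⋙ F)) x
    obtain ⟨κy, y₁, hy⟩ := fp_factor hP (colimit.isColimit (N ⋙ F)) y
    have hwx := colimit.w (N ⋙ F) (IsFiltered.leftToMax κx κy)
    have hwy := colimit.w (N ⋙ F) (IsFiltered.rightToMax κx κy)
    have hx2 : (x₁ ≫ F.map (N.map (IsFiltered.leftToMax κx κy)))
        ≫ colimit.ι (N ⋙ F) (IsFiltered.max κx κy) = x := by
      rw [Category.assoc]
      exact (congrArg (fun t => x₁ ≫ t) hwx).trans hx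
    have hy2 : (y₁ ≫ F.map (N.map (IsFiltered.rightToMax κx κy)))
        ≫ colimit.ι (N ⋙ F) (IsFiltered.max κx κy) = y := by
      rw [Category.assoc]
      exact (congrArg (fun t => y₁ ≫ t) hwy).trans hy
    have hι : colimit.ι (N ⋙ F) (IsFiltered.max κx κy)
        ≫ colimit.desc (N ⋙ F) (F.mapCocone cn)
        = F.map (cn.ι.app (IsFiltered.max κx κy)) := colimit.ι_desc _ _
    have heq : (x₁ ≫ F.map (N.map (IsFiltered.leftToMax κx κy)))
        ≫ F.map (cn.ι.app (IsFiltered.max κx κy))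
        = (y₁ ≫ F.map (N.map (IsFiltered.rightToMax κx κy)))
        ≫ F.map (cn.ι.app (IsFiltered.max κx κy)) := by
      rw [← hι, ← Category.assoc, ← Category.assoc, hx2, hy2]
      exact hxy
    haveI := hleg (IsFiltered.max κx κy)
    haveI : Mono (F.map (cn.ι.app (IsFiltered.max κx κy))) := F.map_mono _
    have h5 := (cancel_mono (F.map (cn.ι.app (IsFiltered.max κx κy)))).mp heq
    rw [← hx2, ← hy2, h5]

/-! ### The two directions of the main theorem -/

theorem finitary_implies_bounded {B : Type w} [Category.{v} B] (hC : IsLFP C)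
    (F : C ⥤ B) [F.PreservesMonomorphisms] (hF : IsFinitary F) : FinitelyBounded F := by
  intro A M₀ m₀ hm₀ hfg₀
  obtain ⟨K, instK, instF, N, nn, w, hmonoD, hfg, hmono, ⟨hcolim⟩⟩ := exists_union hC A
  obtain ⟨hFcol⟩ := hF K N (myCocone N A nn w) ⟨hcolim⟩
  have hmonoFD : MonoDiagram (N ⋙ F) := fun i j f => by
    haveI := hmonoD f
    exact F.map_mono (N.map f)
  obtain ⟨t⟩ := hfg₀ K (N ⋙ F) hmonoFD (F.mapCocone (myCocone N A nn w)) ⟨hFcol⟩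
  obtain ⟨κ, g, hg⟩ :=
    Types.jointly_surjective ((N ⋙ F) ⋙ coyoneda.obj (op M₀)) t m₀
  exact ⟨N.obj κ, nn κ, hmono κ, hfg κ, g, hg⟩

theorem bounded_implies_finitary {B : Type w} [Category.{v} B] (hC : IsLFP C)
    (hfgfp : ∀ X : C, IsFinitelyGenerated X → _root_.IsFinitelyPresentable X)
    (hB : IsLFP B) (F : C ⥤ B) [F.PreservesMonomorphisms] (hbd : FinitelyBounded F) :
    IsFinitary F := by
  intro J _ _ Dg cc hcc'
  obtain ⟨hcc⟩ := hcc'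
  haveI := hB.1
  have hpresB : HasFPPres B := hasFPPres_of_isLFP hB
  apply isColimit_of_fp_comparison hpresB (F.mapCocone cc)
  · -- surjectivity on finitely presentable objects
    intro P hP g
    obtain ⟨M₀, e₀, m₀, hm₀, hfac₀, hfg₀⟩ := exists_image hB (g : P ⟶ F.obj cc.pt)
    obtain ⟨M, m, hm, hMfg, g₁, hg₁⟩ := hbd cc.pt M₀ m₀ hm₀ (hfg₀ hP)
    obtain ⟨j, wj, hwj⟩ := fp_factor (hfgfp M hMfg) hcc m
    refine ⟨e₀ ≫ g₁ ≫ F.map wj ≫ colimit.ι (Dg ⋙ F) j, ?_⟩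
    have hι : colimit.ι (Dg ⋙ F) j ≫ colimit.desc (Dg ⋙ F) (F.mapCocone cc)
        = F.map (cc.ι.app j) := colimit.ι_desc _ _
    rw [Category.assoc, Category.assoc, Category.assoc, hι, ← F.map_comp, hwj, hg₁, hfac₀]
  · -- injectivity on finitely presentable objects
    intro P hP x y hxy
    obtain ⟨jx, x₁, hx⟩ := fp_factor hP (colimit.isColimit (Dg ⋙ F)) x
    obtain ⟨jy, y₁, hy⟩ := fp_factor hP (colimit.isColimit (Dg ⋙ F)) y
    -- push to a common stage j₀
    have hwx := colimit.w (Dg ⋙ F) (IsFiltered.leftToMax jx jy)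
    have hwy := colimit.w (Dg ⋙ F) (IsFiltered.rightToMax jx jy)
    have hx2 : (x₁ ≫ F.map (Dg.map (IsFiltered.leftToMax jx jy)))
        ≫ colimit.ι (Dg ⋙ F) (IsFiltered.max jx jy) = x := by
      rw [Category.assoc]
      exact (congrArg (fun t => x₁ ≫ t) hwx).trans hx
    have hy2 : (y₁ ≫ F.map (Dg.map (IsFiltered.rightToMax jx jy)))
        ≫ colimit.ι (Dg ⋙ F) (IsFiltered.max jx jy) = y := by
      rw [Category.assoc]
      exact (congrArg (fun t => y₁ ≫ t) hwy).trans hy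
    set j₀ := IsFiltered.max jx jy with hj₀
    set x₂ : P ⟶ F.obj (Dg.obj j₀) := x₁ ≫ F.map (Dg.map (IsFiltered.leftToMax jx jy))
      with hx₂def
    set y₂ : P ⟶ F.obj (Dg.obj j₀) := y₁ ≫ F.map (Dg.map (IsFiltered.rightToMax jx jy))
      with hy₂def
    have hι : colimit.ι (Dg ⋙ F) j₀ ≫ colimit.desc (Dg ⋙ F) (F.mapCocone cc)
        = F.map (cc.ι.app j₀) := colimit.ι_desc _ _
    have hstage : x₂ ≫ F.map (cc.ι.app j₀) = y₂ ≫ F.map (cc.ι.app j₀) := by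
      rw [← hι, ← Category.assoc, ← Category.assoc, hx2, hy2]
      exact hxy
    -- express `Dg.obj j₀` as a union of finitely generated subobjects
    obtain ⟨K₃, instK₃, instF₃, N₃, n₃, w₃, hm₃, hfg₃, hmono₃, ⟨hcol₃⟩⟩ :=
      exists_union hC (Dg.obj j₀)
    obtain ⟨hFcol₃⟩ := bounded_preserves_union hB F hbd hm₃
      (myCocone N₃ (Dg.obj j₀) n₃ w₃) hcol₃ hmono₃
    obtain ⟨lx, x₃, hx₃⟩ := fp_factor hP hFcol₃ x₂
    obtain ⟨ly, y₃, hy₃⟩ := fp_factor hP hFcol₃ y₂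
    have hx₃' : x₃ ≫ F.map (n₃ lx) = x₂ := hx₃
    have hy₃' : y₃ ≫ F.map (n₃ ly) = y₂ := hy₃
    set lam0 := IsFiltered.max lx ly with hlam0
    set x₄ : P ⟶ F.obj (N₃.obj lam0) := x₃ ≫ F.map (N₃.map (IsFiltered.leftToMax lx ly))
      with hx₄def
    set y₄ : P ⟶ F.obj (N₃.obj lam0) := y₃ ≫ F.map (N₃.map (IsFiltered.rightToMax lx ly))
      with hy₄def
    have hx₄ : x₄ ≫ F.map (n₃ lam0) = x₂ := by
      rw [hx₄def, Category.assoc, ← F.map_comp, w₃ (IsFiltered.leftToMax lx ly)]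
      exact hx₃'
    have hy₄ : y₄ ≫ F.map (n₃ lam0) = y₂ := by
      rw [hy₄def, Category.assoc, ← F.map_comp, w₃ (IsFiltered.rightToMax lx ly)]
      exact hy₃'
    -- the image of the composite `N₃.obj lam0 ⟶ Dg.obj j₀ ⟶ cc.pt`
    have hSfp : _root_.IsFinitelyPresentable (N₃.obj lam0) := hfgfp _ (hfg₃ lam0)
    obtain ⟨W, ev, mv, hmv, hvfac, hWfg⟩ := exists_image hC (n₃ lam0 ≫ cc.ι.app j₀)
    have hWfp : _root_.IsFinitelyPresentable W := hfgfp _ (hWfg hSfp)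
    haveI := hmv
    haveI : Mono (F.map mv) := F.map_mono mv
    have hstar : x₄ ≫ F.map ev = y₄ ≫ F.map ev := by
      apply (cancel_mono (F.map mv)).mp
      have hxv : (x₄ ≫ F.map ev) ≫ F.map mv = x₂ ≫ F.map (cc.ι.app j₀) := by
        rw [Category.assoc, ← F.map_comp, hvfac, F.map_comp, ← Category.assoc, hx₄]
      have hyv : (y₄ ≫ F.map ev) ≫ F.map mv = y₂ ≫ F.map (cc.ι.app j₀) := by
        rw [Category.assoc, ← F.map_comp, hvfac, F.map_comp, ← Category.assoc, hy₄]
      rw [hxv, hyv]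
      exact hstage
    obtain ⟨j₁, r, hr⟩ := fp_factor hWfp hcc mv
    obtain ⟨j₂, α, β, hmerge⟩ := fp_merge hSfp hcc (n₃ lam0) (ev ≫ r) (by
      rw [Category.assoc, hr, hvfac])
    -- conclude
    have hwα := colimit.w (Dg ⋙ F) α
    have hwβ := colimit.w (Dg ⋙ F) β
    rw [← hx2, ← hy2]
    show x₂ ≫ colimit.ι (Dg ⋙ F) j₀ = y₂ ≫ colimit.ι (Dg ⋙ F) j₀
    calc x₂ ≫ colimit.ι (Dg ⋙ F) j₀
        = x₄ ≫ F.map (n₃ lam0) ≫ colimit.ι (Dg ⋙ F) j₀ := by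
          rw [← Category.assoc, hx₄]
      _ = x₄ ≫ F.map (n₃ lam0) ≫ F.map (Dg.map α) ≫ colimit.ι (Dg ⋙ F) j₂ := by
          rw [show (F.map (Dg.map α) : _) ≫ colimit.ι (Dg ⋙ F) j₂
            = colimit.ι (Dg ⋙ F) j₀ from hwα]
      _ = x₄ ≫ F.map (n₃ lam0 ≫ Dg.map α) ≫ colimit.ι (Dg ⋙ F) j₂ := by
          rw [F.map_comp, Category.assoc]
          simp only [hx₄def, hy₄def, Category.assoc]
      _ = x₄ ≫ F.map ((ev ≫ r) ≫ Dg.map β) ≫ colimit.ι (Dg ⋙ F) j₂ := by rw [hmerge]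
      _ = (x₄ ≫ F.map ev) ≫ F.map (r ≫ Dg.map β) ≫ colimit.ι (Dg ⋙ F) j₂ := by
          simp only [F.map_comp, hx₄def, hy₄def, Category.assoc]
      _ = (y₄ ≫ F.map ev) ≫ F.map (r ≫ Dg.map β) ≫ colimit.ι (Dg ⋙ F) j₂ := by rw [hstar]
      _ = y₄ ≫ F.map ((ev ≫ r) ≫ Dg.map β) ≫ colimit.ι (Dg ⋙ F) j₂ := by
          simp only [F.map_comp, hx₄def, hy₄def, Category.assoc]
      _ = y₄ ≫ F.map (n₃ lam0 ≫ Dg.map α) ≫ colimit.ι (Dg ⋙ F) j₂ := by rw [hmerge]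
      _ = y₄ ≫ F.map (n₃ lam0) ≫ F.map (Dg.map α) ≫ colimit.ι (Dg ⋙ F) j₂ := by
          rw [F.map_comp, Category.assoc]
          simp only [hx₄def, hy₄def, Category.assoc]
      _ = y₄ ≫ F.map (n₃ lam0) ≫ colimit.ι (Dg ⋙ F) j₀ := by
          rw [show (F.map (Dg.map α) : _) ≫ colimit.ι (Dg ⋙ F) j₂
            = colimit.ι (Dg ⋙ F) j₀ from hwα]
      _ = y₂ ≫ colimit.ι (Dg ⋙ F) j₀ := by rw [← Category.assoc, hy₄]


end StmtAux

end Aux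

/-- If every finitely generated object of the lfp category `C` is finitely presentable,
then a monomorphism-preserving functor from `C` to an lfp category is finitary iff
it is finitely bounded. -/
theorem stmt_7 {C : Type u} [Category.{v} C] {B : Type w} [Category.{v} B]
    (hC : IsLFP C) (hfgfp : ∀ X : C, IsFinitelyGenerated X → _root_.IsFinitelyPresentable X)
    (hB : IsLFP B) (F : C ⥤ B) [F.PreservesMonomorphisms] :
    IsFinitary F ↔ FinitelyBounded F := by
  constructor
  · intro hF
    exact StmtAux.finitary_implies_bounded hC F hF
  · intro hbd
    exact StmtAux.bounded_implies_finitary hC hfgfp hB F hbd
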